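/- q(K_4 □ K_4) = 5/7, where K_4 □ K_4 is the cartesian product of the complete graph on 4 vertices with itself. -/

import Mathlib

open SimpleGraph Set
open scoped Classical

/-- The degree ratio of a vertex `v` with respect to the partition `(s, sᶜ)`:
the size of its closed neighborhood inside its own side divided by the size of
its closed neighborhood in `G`. -/
noncomputable def vertexRatio {V : Type*} (G : SimpleGraph V) (s : Set V) (v : V) : ℝ :=
  (((G.neighborSet v ∩ (if v ∈ s then s else sᶜ)).ncard : ℝ) + 1) /
    (((G.neighborSet v).ncard : ℝ) + 1)

/-- The worst (minimum) degree ratio over all vertices, for the partition `(s, sᶜ)`. -/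
noncomputable def minRatio {V : Type*} (G : SimpleGraph V) (s : Set V) : ℝ :=
  sInf (Set.range (vertexRatio G s))

/-- The optimal degree ratio `q(G)`: the maximum over all nontrivial partitions
of the worst degree ratio. -/
noncomputable def degreeRatio {V : Type*} (G : SimpleGraph V) : ℝ :=
  sSup { r : ℝ | ∃ s : Set V, s.Nonempty ∧ sᶜ.Nonempty ∧ r = minRatio G s }

/-! ### Auxiliary definitions -/

private abbrev V4 := Fin 4 × Fin 4

private def G4 : SimpleGraph V4 := (⊤ : SimpleGraph (Fin 4)) □ (⊤ : SimpleGraph (Fin 4))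

private lemma adj_iff (v w : V4) :
    G4.Adj v w ↔ v ≠ w ∧ (v.1 = w.1 ∨ v.2 = w.2) := by
  simp only [G4, boxProd_adj, top_adj, ne_eq, Prod.ext_iff, not_and]
  tauto

private def Nfin (v : V4) : Finset V4 :=
  Finset.univ.filter (fun w => v ≠ w ∧ (v.1 = w.1 ∨ v.2 = w.2))

private lemma neighborSet_eq (v : V4) : G4.neighborSet v = ↑(Nfin v) := by
  ext w
  simp [Nfin, mem_neighborSet, adj_iff]

private lemma card_Nfin : ∀ v : V4, (Nfin v).card = 6 := by decide

private lemma ncard_nbhd (v : V4) : (G4.neighborSet v).ncard = 6 := by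
  rw [neighborSet_eq, ncard_coe_finset, card_Nfin]

private lemma mem_side {s : Set V4} {v w : V4} :
    w ∈ (if v ∈ s then s else sᶜ) ↔ (w ∈ s ↔ v ∈ s) := by
  split_ifs with h <;> simp [h]

private lemma ratio_formula (s : Set V4) (v : V4) :
    vertexRatio G4 s v =
      (((G4.neighborSet v ∩ (if v ∈ s then s else sᶜ)).ncard : ℝ) + 1) / 7 := by
  rw [vertexRatio, ncard_nbhd]; norm_num

/-! ### Lower bound: a partition attaining `5/7` -/

private def s₀ : Set V4 := {v | v.1 = 0 ∨ v.1 = 1}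

private lemma card_inner_s₀ : ∀ v : V4, (Finset.univ.filter (fun w : V4 =>
    (v ≠ w ∧ (v.1 = w.1 ∨ v.2 = w.2)) ∧
      ((w.1 = 0 ∨ w.1 = 1) ↔ (v.1 = 0 ∨ v.1 = 1)))).card = 4 := by decide

private lemma inner_s₀ (v : V4) :
    (G4.neighborSet v ∩ (if v ∈ s₀ then s₀ else s₀ᶜ)).ncard = 4 := by
  have h : G4.neighborSet v ∩ (if v ∈ s₀ then s₀ else s₀ᶜ) =
      ↑(Finset.univ.filter (fun w : V4 =>
        (v ≠ w ∧ (v.1 = w.1 ∨ v.2 = w.2)) ∧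
          ((w.1 = 0 ∨ w.1 = 1) ↔ (v.1 = 0 ∨ v.1 = 1)))) := by
    ext w
    simp only [Set.mem_inter_iff, mem_neighborSet, adj_iff, mem_side,
      Finset.coe_filter, Finset.mem_univ, true_and, Set.mem_setOf_eq]
    rfl
  rw [h, ncard_coe_finset]
  exact card_inner_s₀ v

private lemma ratio_s₀ (v : V4) : vertexRatio G4 s₀ v = 5 / 7 := by
  rw [ratio_formula, inner_s₀]; norm_num

private lemma minRatio_s₀ : minRatio G4 s₀ = 5 / 7 := by
  have h : Set.range (vertexRatio G4 s₀) = {(5 / 7 : ℝ)} := by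
    ext r
    simp only [Set.mem_range, Set.mem_singleton_iff]
    constructor
    · rintro ⟨v, rfl⟩; exact ratio_s₀ v
    · rintro rfl; exact ⟨(0, 0), ratio_s₀ _⟩
  rw [minRatio, h, csInf_singleton]

/-! ### Upper bound: every nontrivial partition has a vertex with ≤ 4 inner neighbours -/

private lemma fin4_bool (f : Fin 4 → Bool) (b b' : Fin 4) (hbb : f b ≠ f b') :
    ∃ c c1 c2, c1 ≠ c2 ∧ c1 ≠ c ∧ c2 ≠ c ∧ f c1 ≠ f c ∧ f c2 ≠ f c := by
  revert f b b'; decide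

private lemma exists_small (s : Set V4) (hs : s.Nonempty) (hs' : sᶜ.Nonempty) :
    ∃ v : V4, (G4.neighborSet v ∩ (if v ∈ s then s else sᶜ)).ncard ≤ 4 := by
  by_contra hcon
  push_neg at hcon
  -- every vertex has at most one "crossing" neighbour
  have cross_le : ∀ v : V4, (G4.neighborSet v \ (if v ∈ s then s else sᶜ)).ncard ≤ 1 := by
    intro v
    have hsum := Set.ncard_inter_add_ncard_diff_eq_ncard (G4.neighborSet v)
      (if v ∈ s then s else sᶜ) (Set.toFinite _)
    rw [ncard_nbhd] at hsum
    have := hcon v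
    omega
  -- a vertex with two distinct crossing neighbours gives a contradiction
  have no_two : ∀ v w1 w2 : V4, w1 ≠ w2 →
      G4.Adj v w1 → G4.Adj v w2 → ¬(w1 ∈ s ↔ v ∈ s) → ¬(w2 ∈ s ↔ v ∈ s) → False := by
    intro v w1 w2 hne h1 h2 hw1 hw2
    have hsub : ({w1, w2} : Set V4) ⊆ G4.neighborSet v \ (if v ∈ s then s else sᶜ) := by
      rintro x (rfl | rfl)
      · exact ⟨h1, fun hx => hw1 (mem_side.mp hx)⟩
      · exact ⟨h2, fun hx => hw2 (mem_side.mp hx)⟩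
    have h2le : 2 ≤ (G4.neighborSet v \ (if v ∈ s then s else sᶜ)).ncard := by
      have := Set.ncard_le_ncard hsub (Set.toFinite _)
      rwa [Set.ncard_pair hne] at this
    exact absurd (cross_le v) (by omega)
  -- rows are monochromatic
  have row_mono : ∀ a b b' : Fin 4, ((a, b) ∈ s ↔ (a, b') ∈ s) := by
    intro a b b'
    by_contra hne
    set f : Fin 4 → Bool := fun c => decide ((a, c) ∈ s) with hf
    have hfb : f b ≠ f b' := by
      simp only [hf, ne_eq, decide_eq_decide]; exact hne
    obtain ⟨c, c1, c2, h12, h1c, h2c, hf1, hf2⟩ := fin4_bool f b b' hfb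
    refine no_two (a, c) (a, c1) (a, c2) (by simp [h12]) ?_ ?_ ?_ ?_
    · exact (adj_iff _ _).mpr ⟨by simp [(Ne.symm h1c)], Or.inl rfl⟩
    · exact (adj_iff _ _).mpr ⟨by simp [(Ne.symm h2c)], Or.inl rfl⟩
    · intro h; exact hf1 (by simp only [hf, decide_eq_decide]; exact h)
    · intro h; exact hf2 (by simp only [hf, decide_eq_decide]; exact h)
  -- columns are monochromatic
  have col_mono : ∀ b a a' : Fin 4, ((a, b) ∈ s ↔ (a', b) ∈ s) := by
    intro b a a'
    by_contra hne
    set f : Fin 4 → Bool := fun c => decide ((c, b) ∈ s) with hf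
    have hfb : f a ≠ f a' := by
      simp only [hf, ne_eq, decide_eq_decide]; exact hne
    obtain ⟨c, c1, c2, h12, h1c, h2c, hf1, hf2⟩ := fin4_bool f a a' hfb
    refine no_two (c, b) (c1, b) (c2, b) (by simp [h12]) ?_ ?_ ?_ ?_
    · exact (adj_iff _ _).mpr ⟨by simp [(Ne.symm h1c)], Or.inr rfl⟩
    · exact (adj_iff _ _).mpr ⟨by simp [(Ne.symm h2c)], Or.inr rfl⟩
    · intro h; exact hf1 (by simp only [hf, decide_eq_decide]; exact h)
    · intro h; exact hf2 (by simp only [hf, decide_eq_decide]; exact h)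
  -- whence the partition is trivial: contradiction
  obtain ⟨⟨a, b⟩, hv⟩ := hs
  obtain ⟨⟨a', b'⟩, hw⟩ := hs'
  exact hw (((col_mono b' a a').mp ((row_mono a b b').mp hv)))

private lemma minRatio_le (s : Set V4) (hs : s.Nonempty) (hs' : sᶜ.Nonempty) :
    minRatio G4 s ≤ 5 / 7 := by
  obtain ⟨v, hv⟩ := exists_small s hs hs'
  have hval : vertexRatio G4 s v ≤ 5 / 7 := by
    rw [ratio_formula]
    have : ((G4.neighborSet v ∩ (if v ∈ s then s else sᶜ)).ncard : ℝ) ≤ 4 := by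
      exact_mod_cast hv
    linarith
  refine le_trans ?_ hval
  exact csInf_le (Set.Finite.bddBelow (Set.finite_range _)) (Set.mem_range_self v)

theorem stmt_19 :
    degreeRatio ((⊤ : SimpleGraph (Fin 4)) □ (⊤ : SimpleGraph (Fin 4))) = 5 / 7 := by
  show degreeRatio G4 = 5 / 7
  have hmem : (5 / 7 : ℝ) ∈ { r : ℝ | ∃ s : Set V4, s.Nonempty ∧ sᶜ.Nonempty ∧ r = minRatio G4 s } :=
    ⟨s₀, ⟨(0, 0), Or.inl rfl⟩, ⟨(2, 0), by simp [s₀]⟩, minRatio_s₀.symm⟩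
  have hub : ∀ r ∈ { r : ℝ | ∃ s : Set V4, s.Nonempty ∧ sᶜ.Nonempty ∧ r = minRatio G4 s },
      r ≤ 5 / 7 := by
    rintro r ⟨s, h1, h2, rfl⟩
    exact minRatio_le s h1 h2
  exact le_antisymm (csSup_le ⟨5 / 7, hmem⟩ hub) (le_csSup ⟨5 / 7, hub⟩ hmem)
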